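/- Let a ∈ GL(2,ℂ) with |det a| = 1 and let κ = diag(a, (a†)⁻¹) ∈ K. Then for every skew-Hermitian M ∈ M₂(ℂ), κ Σ(M) κ⁻¹ = Σ(a M a†). In other words, Σ is an intertwining operator between the standard action of K on u(2) ≅ ℝ⁴ (by M ↦ aMa†) and the adjoint action of K on su(2,2). -/

import Mathlib

open Matrix Complex

noncomputable section

abbrev M2 : Type := Matrix (Fin 2) (Fin 2) ℂ
abbrev M4 : Type := Matrix (Fin 2 ⊕ Fin 2) (Fin 2 ⊕ Fin 2) ℂ

/-- The Pauli matrices `σ₀ = I₂, σ₁, σ₂, σ₃`. -/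
def pauli : Fin 4 → M2
  | 0 => 1
  | 1 => !![0, 1; 1, 0]
  | 2 => !![0, -Complex.I; Complex.I, 0]
  | 3 => !![1, 0; 0, -1]

/-- `M(x) = i (x⁰σ₀ + x¹σ₁ + x²σ₂ + x³σ₃)`. -/
def Mmap (x : Fin 4 → ℝ) : M2 := Complex.I • ∑ μ : Fin 4, (x μ : ℂ) • pauli μ

/-- The parity operator on coordinates: `π(M(x)) = M(P x)`. -/
def Pmap (x : Fin 4 → ℝ) : Fin 4 → ℝ := ![x 0, -x 1, -x 2, -x 3]

/-- `Σ(M(x)) = [[0, −M(x)],[−π(M(x)), 0]]` in 2×2 blocks. -/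
def SigMap (x : Fin 4 → ℝ) : M4 := fromBlocks 0 (-(Mmap x)) (-(Mmap (Pmap x))) 0

lemma Mmap_P_eq_adj (x : Fin 4 → ℝ) : Mmap (Pmap x) = (Mmap x).adjugate := by
  ext i j
  fin_cases i <;> fin_cases j <;>
    simp [Mmap, Pmap, pauli, Fin.sum_univ_four, Matrix.adjugate_fin_two,
      Matrix.smul_apply, Matrix.sum_apply] <;> ring

lemma adj_eq_det_smul_inv (a : M2) (ha : IsUnit a) : a.adjugate = a.det • a⁻¹ := by
  have hd : IsUnit a.det := (Matrix.isUnit_iff_isUnit_det a).mp ha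
  have h1 : a⁻¹ * (a * a.adjugate) = a⁻¹ * (a.det • 1) := by rw [Matrix.mul_adjugate]
  rw [← Matrix.mul_assoc, Matrix.nonsing_inv_mul a hd, Matrix.one_mul] at h1
  rw [h1, Matrix.mul_smul, Matrix.mul_one]

theorem stmt11 (a : M2) (ha : IsUnit a) (hdet : ‖a.det‖ = 1)
    (x y : Fin 4 → ℝ) (h : a * Mmap x * aᴴ = Mmap y) :
    fromBlocks a 0 0 (aᴴ)⁻¹ * SigMap x * (fromBlocks a 0 0 (aᴴ)⁻¹ : M4)⁻¹ = SigMap y := by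
  have hd : IsUnit a.det := (Matrix.isUnit_iff_isUnit_det a).mp ha
  have hdH : IsUnit (aᴴ).det := by
    rw [Matrix.det_conjTranspose]; exact hd.star
  have haH : IsUnit (aᴴ) := (Matrix.isUnit_iff_isUnit_det _).mpr hdH
  have hinv : (fromBlocks a 0 0 (aᴴ)⁻¹ : M4)⁻¹ = fromBlocks a⁻¹ 0 0 aᴴ := by
    apply Matrix.inv_eq_right_inv
    rw [Matrix.fromBlocks_multiply]
    simp [Matrix.mul_nonsing_inv a hd, Matrix.nonsing_inv_mul _ hdH,
      ← Matrix.fromBlocks_one]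
  have hsd : star a.det * a.det = 1 := by
    rw [Complex.star_def, mul_comm, Complex.mul_conj, Complex.normSq_eq_norm_sq, hdet]
    norm_num
  have hbl : (aᴴ)⁻¹ * (Mmap x).adjugate * a⁻¹ = (Mmap y).adjugate := by
    rw [← h, Matrix.adjugate_mul_distrib, Matrix.adjugate_mul_distrib,
      adj_eq_det_smul_inv a ha, adj_eq_det_smul_inv aᴴ haH, Matrix.det_conjTranspose]
    simp only [smul_mul_assoc, mul_smul_comm, smul_smul]
    rw [mul_comm, hsd, one_smul, Matrix.mul_assoc]
  have h1 : a * (Mmap x * aᴴ) = Mmap y := by rw [← Matrix.mul_assoc]; exact h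
  have h2 : aᴴ⁻¹ * (Mmap (Pmap x) * a⁻¹) = Mmap (Pmap y) := by
    rw [Mmap_P_eq_adj, Mmap_P_eq_adj, ← Matrix.mul_assoc]; exact hbl
  rw [hinv, SigMap, SigMap, Matrix.fromBlocks_multiply, Matrix.fromBlocks_multiply]
  simp only [Matrix.zero_mul, Matrix.mul_zero, add_zero, zero_add,
    Matrix.mul_neg, Matrix.neg_mul, Matrix.mul_assoc]
  rw [h1, h2, neg_zero]
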